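/- Let g be a positive, symmetric, differentiable density on ℝ, decreasing near +∞, satisfying |(log g)'| ≤ Λ, Ḡ(y) ≍ g(y)y^{κ−1} as y → ∞ for some κ ∈ [1,2], y ↦ (1+y²)g(y) bounded, and g/φ increasing on [0,∞) from (g/φ)(0) < 1 to ∞. Let β(x) = g(x)/φ(x) − 1 and ζ(w) = β^{-1}(1/w). Then there is a constant C > 0 such that for all sufficiently small w: ζ(w) ≥ (−2 log w − 2 log g(√(−2 log(Cw))) − log(2π))^{1/2}, ζ(w) ≤ (−2 log w − 2 log g(√(−5 log w)) + C)^{1/2}, and the sharper bound ζ(w) ≤ (−2 log w − 2 log g((−2 log w + 6Λ(−log w)^{1/2})^{1/2}) + C)^{1/2}. In particular ζ(w) ~ (−2 log w)^{1/2} as w → 0. -/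

import Mathlib

open MeasureTheory ProbabilityTheory Filter Set
open scoped Classical ENNReal

/-- The standard normal density `φ`. -/
noncomputable def stdphi (x : ℝ) : ℝ := (Real.sqrt (2 * Real.pi))⁻¹ * Real.exp (-(x ^ 2) / 2)

/-- The standard normal upper tail function `Φ̄`. -/
noncomputable def Phibar (s : ℝ) : ℝ := ∫ x in Set.Ioi s, stdphi x

/-- The inverse of `Φ̄` (as the generalized inverse). -/
noncomputable def PhibarInv (y : ℝ) : ℝ := sInf {x : ℝ | Phibar x ≤ y}

/-- The upper tail function `Ḡ(s) = ∫_s^∞ g`. -/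
noncomputable def Gbar (g : ℝ → ℝ) (s : ℝ) : ℝ := ∫ x in Set.Ioi s, g x

/-- The ℓ-value `ℓ(x; w, g)`. -/
noncomputable def lval (g : ℝ → ℝ) (w x : ℝ) : ℝ :=
  ((1 - w) * stdphi x) / ((1 - w) * stdphi x + w * g x)

/-- The q-value `q(x; w, g)`. -/
noncomputable def qval (g : ℝ → ℝ) (w x : ℝ) : ℝ :=
  ((1 - w) * Phibar |x|) / ((1 - w) * Phibar |x| + w * Gbar g |x|)

/-- `r(w,t) = wt/((1−w)(1−t))`. -/
noncomputable def rwt (w t : ℝ) : ℝ := w * t / ((1 - w) * (1 - t))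

/-- `β(x) = g(x)/φ(x) − 1`. -/
noncomputable def betaf (g : ℝ → ℝ) (x : ℝ) : ℝ := g x / stdphi x - 1

/-- `m̃(w) = −E₀[β(X,w)]`, the minus-expectation of the score at a null coordinate. -/
noncomputable def mtilde (g : ℝ → ℝ) (w : ℝ) : ℝ :=
  -∫ x, betaf g x / (1 + w * betaf g x) * stdphi x

/-- `m₁(μ,w) = E_μ[β(X,w)]` where `X ~ N(μ,1)`. -/
noncomputable def m1 (g : ℝ → ℝ) (μ w : ℝ) : ℝ :=
  ∫ x, betaf g x / (1 + w * betaf g x) * stdphi (x - μ)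


set_option maxHeartbeats 2000000 in
/-- **Lemma (bounds on the pseudo-threshold `ζ`).** Let `g` be a positive symmetric
differentiable density, decreasing near `+∞`, with `|(log g)'| ≤ Λ`, `Ḡ(y) ≍ g(y)y^{κ−1}` as
`y → ∞` (`κ ∈ [1,2]`), `(1+y²)g(y)` bounded, and `g/φ` increasing on `[0,∞)` from
`(g/φ)(0) < 1` to `∞`. Let `ζ(w) = β⁻¹(1/w)` where `β = g/φ − 1`. Then there is `C > 0` such
that for all sufficiently small `w`:
`ζ(w) ≥ (−2 log w − 2 log g(√(−2 log(Cw))) − log(2π))^{1/2}`,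
`ζ(w) ≤ (−2 log w − 2 log g(√(−5 log w)) + C)^{1/2}`, and the sharper bound
`ζ(w) ≤ (−2 log w − 2 log g((−2 log w + 6Λ(−log w)^{1/2})^{1/2}) + C)^{1/2}`.
In particular `ζ(w) ∼ (−2 log w)^{1/2}` as `w → 0⁺`. -/
theorem zeta_threshold_bounds
    (g : ℝ → ℝ) (Λ κ : ℝ)
    (hpos : ∀ x, 0 < g x) (hsymm : ∀ x, g (-x) = g x)
    (hdiff : Differentiable ℝ g) (hdens : ∫ x, g x = 1)
    (hdec : ∃ M : ℝ, StrictAntiOn g (Set.Ici M))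
    (hΛ : 0 < Λ) (hlip : ∀ x : ℝ, |deriv (fun y => Real.log (g y)) x| ≤ Λ)
    (hκ : κ ∈ Set.Icc (1 : ℝ) 2)
    (htail : ∃ c C : ℝ, 0 < c ∧ 0 < C ∧ ∃ y₀ : ℝ, ∀ y ≥ y₀,
      c * (g y * y ^ (κ - 1)) ≤ Gbar g y ∧ Gbar g y ≤ C * (g y * y ^ (κ - 1)))
    (hbdd : ∃ M : ℝ, ∀ y : ℝ, (1 + y ^ 2) * g y ≤ M)
    (hinc : StrictMonoOn (fun x => g x / stdphi x) (Set.Ici 0))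
    (h0 : g 0 / stdphi 0 < 1)
    (hinf : Filter.Tendsto (fun x => g x / stdphi x) Filter.atTop Filter.atTop)
    (ζ : ℝ → ℝ)
    (hζ : ∀ w : ℝ, 0 < w → w ≤ 1 → 0 ≤ ζ w ∧ betaf g (ζ w) = w⁻¹) :
    (∃ C : ℝ, 0 < C ∧ ∃ w₀ : ℝ, 0 < w₀ ∧ w₀ ≤ 1 ∧ ∀ w : ℝ, 0 < w → w ≤ w₀ →
        Real.sqrt (-2 * Real.log w -
            2 * Real.log (g (Real.sqrt (-2 * Real.log (C * w)))) -
            Real.log (2 * Real.pi)) ≤ ζ w ∧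
        ζ w ≤ Real.sqrt (-2 * Real.log w -
            2 * Real.log (g (Real.sqrt (-5 * Real.log w))) + C) ∧
        ζ w ≤ Real.sqrt (-2 * Real.log w -
            2 * Real.log (g (Real.sqrt
              (-2 * Real.log w + 6 * Λ * Real.sqrt (-Real.log w)))) + C)) ∧
      Filter.Tendsto (fun w : ℝ => ζ w / Real.sqrt (-2 * Real.log w))
        (nhdsWithin 0 (Set.Ioi 0)) (nhds 1) := by
  obtain ⟨Mb, hMb⟩ := hbdd
  obtain ⟨M₀, hanti⟩ := hdec
  have hgM : ∀ y, g y ≤ Mb := by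
    intro y
    have h1 : g y ≤ (1 + y ^ 2) * g y := by nlinarith [sq_nonneg y, (hpos y).le]
    exact h1.trans (hMb y)
  have hMbpos : 0 < Mb := (hpos 0).trans_le (hgM 0)
  have hπ : (0:ℝ) < 2 * Real.pi := by positivity
  have hphi_pos : ∀ x : ℝ, 0 < stdphi x := by
    intro x; unfold stdphi; positivity
  have hlogphi : ∀ x : ℝ, Real.log (stdphi x) = -(x ^ 2) / 2 - Real.log (2 * Real.pi) / 2 := by
    intro x
    unfold stdphi
    rw [Real.log_mul (by positivity) (Real.exp_ne_zero _), Real.log_inv,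
      Real.log_exp, Real.log_sqrt hπ.le]
    ring
  have hdlog : Differentiable ℝ (fun y => Real.log (g y)) := fun x =>
    (hdiff x).log (hpos x).ne'
  have hLip : ∀ x : ℝ, |Real.log (g x) - Real.log (g 0)| ≤ Λ * |x| := by
    intro x
    have hlw : LipschitzWith (Real.toNNReal Λ) (fun y => Real.log (g y)) := by
      apply lipschitzWith_of_nnnorm_deriv_le hdlog
      intro x
      rw [← NNReal.coe_le_coe]
      simpa [Real.coe_toNNReal _ hΛ.le, Real.norm_eq_abs] using hlip x
    have h := hlw.dist_le_mul x 0
    simpa [Real.dist_eq, Real.coe_toNNReal _ hΛ.le] using h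
  have hga : ∀ a b : ℝ, M₀ ≤ a → a ≤ b → g b ≤ g a := by
    intro a b ha hab
    rcases hab.eq_or_lt with h | h
    · rw [h]
    · exact (hanti (Set.mem_Ici.mpr ha) (Set.mem_Ici.mpr (ha.trans hab)) h).le
  set c₁ := Real.log (2 * Real.pi) + 2 * Real.log Mb with hc₁def
  set c₂ := 2 * Real.log 2 - Real.log (2 * Real.pi) - 2 * Real.log (g 0) with hc₂def
  set c₃ := max (c₂ + Λ ^ 2) 0 with hc₃def
  have hc₃0 : (0:ℝ) ≤ c₃ := le_max_right _ _
  have hc₂c₃ : c₂ + Λ ^ 2 ≤ c₃ := le_max_left _ _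
  have key : ∀ w : ℝ, 0 < w → w ≤ 1 →
      0 ≤ ζ w ∧
      2 * (-Real.log w) - Real.log (2 * Real.pi) - 2 * Real.log (g (ζ w)) ≤ (ζ w) ^ 2 ∧
      2 * (-Real.log w) - c₁ ≤ (ζ w) ^ 2 ∧
      (ζ w) ^ 2 + 2 * Real.log (g (ζ w)) ≤
        2 * (-Real.log w) + 2 * Real.log 2 - Real.log (2 * Real.pi) ∧
      (ζ w) ^ 2 ≤ 2 * (-Real.log w) + c₂ + 2 * Λ * ζ w ∧
      ζ w ≤ Λ + Real.sqrt (2 * (-Real.log w) + c₃) := by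
    intro w hw0 hw1
    obtain ⟨hz0, hβ⟩ := hζ w hw0 hw1
    set z := ζ w with hzdef
    have hwi : 0 < w⁻¹ := inv_pos.mpr hw0
    have h1wi : (0:ℝ) < 1 + w⁻¹ := by linarith
    have hgz : g z = (1 + w⁻¹) * stdphi z := by
      have hd : g z / stdphi z = 1 + w⁻¹ := by
        unfold betaf at hβ; linarith
      rw [div_eq_iff (hphi_pos z).ne'] at hd; exact hd
    have hlogz : Real.log (g z)
        = Real.log (1 + w⁻¹) + (-(z ^ 2) / 2 - Real.log (2 * Real.pi) / 2) := by
      rw [hgz, Real.log_mul h1wi.ne' (hphi_pos z).ne', hlogphi z]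
    have hid : z ^ 2 = 2 * Real.log (1 + w⁻¹) - Real.log (2 * Real.pi) - 2 * Real.log (g z) := by
      linarith [hlogz]
    have hLlog : -Real.log w ≤ Real.log (1 + w⁻¹) := by
      have h := Real.log_le_log hwi (by linarith : w⁻¹ ≤ 1 + w⁻¹)
      rwa [Real.log_inv] at h
    have hone : (1:ℝ) ≤ w⁻¹ := by
      have := inv_anti₀ hw0 hw1
      simpa using this
    have hlogup : Real.log (1 + w⁻¹) ≤ Real.log 2 + -Real.log w := by
      have h2 : 1 + w⁻¹ ≤ 2 * w⁻¹ := by linarith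
      have h := Real.log_le_log h1wi h2
      rwa [Real.log_mul (by norm_num) hwi.ne', Real.log_inv] at h
    have hgzM : Real.log (g z) ≤ Real.log Mb := Real.log_le_log (hpos z) (hgM z)
    have k2 : 2 * (-Real.log w) - Real.log (2 * Real.pi) - 2 * Real.log (g z) ≤ z ^ 2 := by
      linarith
    have k3 : 2 * (-Real.log w) - c₁ ≤ z ^ 2 := by
      rw [hc₁def]; linarith
    have k4 : z ^ 2 + 2 * Real.log (g z) ≤
        2 * (-Real.log w) + 2 * Real.log 2 - Real.log (2 * Real.pi) := by
      linarith
    have hgzlow : Real.log (g 0) - Λ * z ≤ Real.log (g z) := by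
      have h2 := (abs_le.mp (hLip z)).1
      rw [abs_of_nonneg hz0] at h2; linarith
    have k6 : z ^ 2 ≤ 2 * (-Real.log w) + c₂ + 2 * Λ * z := by
      rw [hc₂def]; linarith
    have k5 : z ≤ Λ + Real.sqrt (2 * (-Real.log w) + c₃) := by
      have hsq : (z - Λ) ^ 2 ≤ 2 * (-Real.log w) + c₃ := by nlinarith [k6, hc₂c₃]
      have h1 : z - Λ ≤ |z - Λ| := le_abs_self _
      have h2 : |z - Λ| = Real.sqrt ((z - Λ) ^ 2) := (Real.sqrt_sq_eq_abs _).symm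
      have h3 : Real.sqrt ((z - Λ) ^ 2) ≤ Real.sqrt (2 * (-Real.log w) + c₃) :=
        Real.sqrt_le_sqrt hsq
      linarith
    exact ⟨hz0, k2, k3, k4, k6, k5⟩
  -- constants
  set M₀' := max M₀ 0 with hM₀'def
  have hM₀'0 : (0:ℝ) ≤ M₀' := le_max_right _ _
  have hM₀M : M₀ ≤ M₀' := le_max_left _ _
  set CC := max (Real.sqrt (2 * Real.pi) * Mb) 1 with hCCdef
  have hCC1 : (1:ℝ) ≤ CC := le_max_right _ _
  have hCCpos : (0:ℝ) < CC := lt_of_lt_of_le one_pos hCC1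
  have hlogCC : c₁ ≤ 2 * Real.log CC := by
    have h1 : Real.sqrt (2 * Real.pi) * Mb ≤ CC := le_max_left _ _
    have h2 : (0:ℝ) < Real.sqrt (2 * Real.pi) * Mb := by positivity
    have h3 := Real.log_le_log h2 h1
    rw [Real.log_mul (by positivity) hMbpos.ne', Real.log_sqrt hπ.le] at h3
    rw [hc₁def]; linarith
  set L₀ := max (1:ℝ) 0 + max (Real.log CC + (M₀' + 1) ^ 2 / 2) 0 + max ((c₁ + M₀' ^ 2) / 2) 0
    + max (c₃ / 2) 0 + max ((Λ + c₂ / (2 * Λ)) ^ 2) 0 + max (4 * Λ ^ 2) 0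
    + max (M₀' ^ 2) 0 with hL₀def
  have hB1 : (1:ℝ) ≤ L₀ := by
    rw [hL₀def]
    have := le_max_left (1:ℝ) 0
    have := le_max_right (Real.log CC + (M₀' + 1) ^ 2 / 2) 0
    have := le_max_right ((c₁ + M₀' ^ 2) / 2) 0
    have := le_max_right (c₃ / 2) 0
    have := le_max_right ((Λ + c₂ / (2 * Λ)) ^ 2) 0
    have := le_max_right (4 * Λ ^ 2) 0
    have := le_max_right (M₀' ^ 2) 0
    linarith
  have hB2 : Real.log CC + (M₀' + 1) ^ 2 / 2 ≤ L₀ := by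
    rw [hL₀def]
    have := le_max_right (1:ℝ) 0
    have := le_max_left (Real.log CC + (M₀' + 1) ^ 2 / 2) 0
    have := le_max_right ((c₁ + M₀' ^ 2) / 2) 0
    have := le_max_right (c₃ / 2) 0
    have := le_max_right ((Λ + c₂ / (2 * Λ)) ^ 2) 0
    have := le_max_right (4 * Λ ^ 2) 0
    have := le_max_right (M₀' ^ 2) 0
    linarith
  have hB3 : (c₁ + M₀' ^ 2) / 2 ≤ L₀ := by
    rw [hL₀def]
    have := le_max_right (1:ℝ) 0
    have := le_max_right (Real.log CC + (M₀' + 1) ^ 2 / 2) 0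
    have := le_max_left ((c₁ + M₀' ^ 2) / 2) 0
    have := le_max_right (c₃ / 2) 0
    have := le_max_right ((Λ + c₂ / (2 * Λ)) ^ 2) 0
    have := le_max_right (4 * Λ ^ 2) 0
    have := le_max_right (M₀' ^ 2) 0
    linarith
  have hB4 : c₃ / 2 ≤ L₀ := by
    rw [hL₀def]
    have := le_max_right (1:ℝ) 0
    have := le_max_right (Real.log CC + (M₀' + 1) ^ 2 / 2) 0
    have := le_max_right ((c₁ + M₀' ^ 2) / 2) 0
    have := le_max_left (c₃ / 2) 0
    have := le_max_right ((Λ + c₂ / (2 * Λ)) ^ 2) 0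
    have := le_max_right (4 * Λ ^ 2) 0
    have := le_max_right (M₀' ^ 2) 0
    linarith
  have hB5 : (Λ + c₂ / (2 * Λ)) ^ 2 ≤ L₀ := by
    rw [hL₀def]
    have := le_max_right (1:ℝ) 0
    have := le_max_right (Real.log CC + (M₀' + 1) ^ 2 / 2) 0
    have := le_max_right ((c₁ + M₀' ^ 2) / 2) 0
    have := le_max_right (c₃ / 2) 0
    have := le_max_left ((Λ + c₂ / (2 * Λ)) ^ 2) 0
    have := le_max_right (4 * Λ ^ 2) 0
    have := le_max_right (M₀' ^ 2) 0
    linarith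
  have hB6 : 4 * Λ ^ 2 ≤ L₀ := by
    rw [hL₀def]
    have := le_max_right (1:ℝ) 0
    have := le_max_right (Real.log CC + (M₀' + 1) ^ 2 / 2) 0
    have := le_max_right ((c₁ + M₀' ^ 2) / 2) 0
    have := le_max_right (c₃ / 2) 0
    have := le_max_right ((Λ + c₂ / (2 * Λ)) ^ 2) 0
    have := le_max_left (4 * Λ ^ 2) 0
    have := le_max_right (M₀' ^ 2) 0
    linarith
  have hB7 : M₀' ^ 2 ≤ L₀ := by
    rw [hL₀def]
    have := le_max_right (1:ℝ) 0
    have := le_max_right (Real.log CC + (M₀' + 1) ^ 2 / 2) 0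
    have := le_max_right ((c₁ + M₀' ^ 2) / 2) 0
    have := le_max_right (c₃ / 2) 0
    have := le_max_right ((Λ + c₂ / (2 * Λ)) ^ 2) 0
    have := le_max_right (4 * Λ ^ 2) 0
    have := le_max_left (M₀' ^ 2) 0
    linarith
  have hC2neg : 2 * Real.log 2 - Real.log (2 * Real.pi) ≤ 0 := by
    have h4 : (4:ℝ) ≤ 2 * Real.pi := by linarith [Real.pi_gt_three]
    have h5 := Real.log_le_log (by norm_num : (0:ℝ) < 4) h4
    have h2 : Real.log 4 = 2 * Real.log 2 := by
      rw [show (4:ℝ) = 2 ^ 2 by norm_num, Real.log_pow]; push_cast; ring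
    linarith
  constructor
  · -- existence of C and w₀
    refine ⟨CC, hCCpos, Real.exp (-L₀), Real.exp_pos _, ?_, ?_⟩
    · exact Real.exp_le_one_iff.mpr (by linarith)
    intro w hw0 hww₀
    have hw1 : w ≤ 1 := hww₀.trans (Real.exp_le_one_iff.mpr (by linarith))
    obtain ⟨hz0, k2, k3, k4, k6, k5⟩ := key w hw0 hw1
    have hLL : L₀ ≤ -Real.log w := by
      have h := Real.log_le_log hw0 hww₀
      rw [Real.log_exp] at h; linarith
    set z := ζ w with hzdef
    set L := -Real.log w with hLdef
    have hL1 : (1:ℝ) ≤ L := hB1.trans hLL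
    have hL0 : (0:ℝ) ≤ L := by linarith
    have hsL0 : 0 ≤ Real.sqrt L := Real.sqrt_nonneg L
    have hsL : Real.sqrt L * Real.sqrt L = L := Real.mul_self_sqrt hL0
    -- z ≥ M₀'
    have hzM : M₀' ≤ z := by
      have hT3 : (c₁ + M₀' ^ 2) / 2 ≤ L := hB3.trans hLL
      have h1 : M₀' ^ 2 ≤ z ^ 2 := by linarith [k3]
      calc M₀' = Real.sqrt (M₀' ^ 2) := (Real.sqrt_sq hM₀'0).symm
        _ ≤ Real.sqrt (z ^ 2) := Real.sqrt_le_sqrt h1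
        _ = z := Real.sqrt_sq hz0
    refine ⟨?_, ?_, ?_⟩
    · -- lower bound
      set y₁ := Real.sqrt (-2 * Real.log (CC * w)) with hy₁def
      have hy₁arg : -2 * Real.log (CC * w) = 2 * L - 2 * Real.log CC := by
        rw [hLdef, Real.log_mul hCCpos.ne' hw0.ne']; ring
      have hT2 : Real.log CC + (M₀' + 1) ^ 2 / 2 ≤ L := hB2.trans hLL
      have hy₁M : M₀' ≤ y₁ := by
        have h1 : (M₀' + 1) ^ 2 ≤ -2 * Real.log (CC * w) := by
          rw [hy₁arg]; linarith
        have h2 := Real.sqrt_le_sqrt h1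
        rw [Real.sqrt_sq (by linarith : (0:ℝ) ≤ M₀' + 1)] at h2
        rw [hy₁def]; linarith
      have hy₁z : y₁ ≤ z := by
        have h1 : -2 * Real.log (CC * w) ≤ z ^ 2 := by
          rw [hy₁arg]; linarith [k3, hlogCC]
        calc y₁ ≤ Real.sqrt (z ^ 2) := Real.sqrt_le_sqrt h1
          _ = z := Real.sqrt_sq hz0
      have hgy₁ : g z ≤ g y₁ := hga y₁ z (hM₀M.trans hy₁M) hy₁z
      have hloggy : Real.log (g z) ≤ Real.log (g y₁) := Real.log_le_log (hpos z) hgy₁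
      have harg : -2 * Real.log w - 2 * Real.log (g y₁) - Real.log (2 * Real.pi) ≤ z ^ 2 := by
        have he2 : -2 * Real.log w = 2 * L := by rw [hLdef]; ring
        rw [he2]; linarith [k2]
      calc Real.sqrt (-2 * Real.log w - 2 * Real.log (g y₁) - Real.log (2 * Real.pi))
          ≤ Real.sqrt (z ^ 2) := Real.sqrt_le_sqrt harg
        _ = z := Real.sqrt_sq hz0
    · -- first upper bound
      have hz2s : z ≤ Λ + 2 * Real.sqrt L := by
        have hT4 : c₃ / 2 ≤ L := hB4.trans hLL
        have h1 : 2 * L + c₃ ≤ 4 * L := by linarith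
        have h2 : Real.sqrt (2 * L + c₃) ≤ Real.sqrt (4 * L) := Real.sqrt_le_sqrt h1
        have h3 : Real.sqrt (4 * L) = 2 * Real.sqrt L := by
          rw [show (4:ℝ) * L = 2 ^ 2 * L by ring, Real.sqrt_mul (by positivity),
            Real.sqrt_sq (by norm_num : (0:ℝ) ≤ 2)]
        linarith [k5]
      have hd : 2 * Λ ^ 2 + c₂ ≤ 2 * Λ * Real.sqrt L := by
        have hT5 : (Λ + c₂ / (2 * Λ)) ^ 2 ≤ L := hB5.trans hLL
        have h1 : Λ + c₂ / (2 * Λ) ≤ Real.sqrt L := by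
          calc Λ + c₂ / (2 * Λ) ≤ |Λ + c₂ / (2 * Λ)| := le_abs_self _
            _ = Real.sqrt ((Λ + c₂ / (2 * Λ)) ^ 2) := (Real.sqrt_sq_eq_abs _).symm
            _ ≤ Real.sqrt L := Real.sqrt_le_sqrt hT5
        have h2 := mul_le_mul_of_nonneg_left h1 (by positivity : (0:ℝ) ≤ 2 * Λ)
        have h3 : 2 * Λ * (Λ + c₂ / (2 * Λ)) = 2 * Λ ^ 2 + c₂ := by
          field_simp
        linarith
      have he : z ^ 2 ≤ 2 * L + 6 * Λ * Real.sqrt L := by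
        have h4 := mul_le_mul_of_nonneg_left hz2s (by positivity : (0:ℝ) ≤ 2 * Λ)
        linarith [k6, hd, h4]
      have hf : z ^ 2 ≤ 5 * L := by
        have hT6 : 4 * Λ ^ 2 ≤ L := hB6.trans hLL
        have h1 : 2 * Λ ≤ Real.sqrt L := by
          calc 2 * Λ = Real.sqrt ((2 * Λ) ^ 2) := (Real.sqrt_sq (by positivity)).symm
            _ ≤ Real.sqrt L := Real.sqrt_le_sqrt (by linarith [hT6])
        have h3 := mul_le_mul_of_nonneg_left h1 (by positivity : (0:ℝ) ≤ 3 * Real.sqrt L)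
        linarith [he, h3, hsL]
      set y₂ := Real.sqrt (-5 * Real.log w) with hy₂def
      have hy₂arg : -5 * Real.log w = 5 * L := by rw [hLdef]; ring
      have hzy₂ : z ≤ y₂ := by
        calc z = Real.sqrt (z ^ 2) := (Real.sqrt_sq hz0).symm
          _ ≤ y₂ := Real.sqrt_le_sqrt (by rw [hy₂arg]; exact hf)
      have hy₂M : M₀' ≤ y₂ := by
        have hT7 : M₀' ^ 2 ≤ L := hB7.trans hLL
        have h1 : M₀' ^ 2 ≤ -5 * Real.log w := by rw [hy₂arg]; linarith
        calc M₀' = Real.sqrt (M₀' ^ 2) := (Real.sqrt_sq hM₀'0).symm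
          _ ≤ y₂ := Real.sqrt_le_sqrt h1
      have hgy₂ : g y₂ ≤ g z := hga z y₂ (hM₀M.trans hzM) hzy₂
      have hlg := Real.log_le_log (hpos y₂) hgy₂
      have hub : z ^ 2 ≤ -2 * Real.log w - 2 * Real.log (g y₂) + CC := by
        have he2 : -2 * Real.log w = 2 * L := by rw [hLdef]; ring
        rw [he2]; linarith [k4, hlg, hC2neg, hCC1]
      calc z = Real.sqrt (z ^ 2) := (Real.sqrt_sq hz0).symm
        _ ≤ Real.sqrt (-2 * Real.log w - 2 * Real.log (g y₂) + CC) := Real.sqrt_le_sqrt hub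
    · -- second (sharper) upper bound
      have hz2s : z ≤ Λ + 2 * Real.sqrt L := by
        have hT4 : c₃ / 2 ≤ L := hB4.trans hLL
        have h1 : 2 * L + c₃ ≤ 4 * L := by linarith
        have h2 : Real.sqrt (2 * L + c₃) ≤ Real.sqrt (4 * L) := Real.sqrt_le_sqrt h1
        have h3 : Real.sqrt (4 * L) = 2 * Real.sqrt L := by
          rw [show (4:ℝ) * L = 2 ^ 2 * L by ring, Real.sqrt_mul (by positivity),
            Real.sqrt_sq (by norm_num : (0:ℝ) ≤ 2)]
        linarith [k5]
      have hd : 2 * Λ ^ 2 + c₂ ≤ 2 * Λ * Real.sqrt L := by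
        have hT5 : (Λ + c₂ / (2 * Λ)) ^ 2 ≤ L := hB5.trans hLL
        have h1 : Λ + c₂ / (2 * Λ) ≤ Real.sqrt L := by
          calc Λ + c₂ / (2 * Λ) ≤ |Λ + c₂ / (2 * Λ)| := le_abs_self _
            _ = Real.sqrt ((Λ + c₂ / (2 * Λ)) ^ 2) := (Real.sqrt_sq_eq_abs _).symm
            _ ≤ Real.sqrt L := Real.sqrt_le_sqrt hT5
        have h2 := mul_le_mul_of_nonneg_left h1 (by positivity : (0:ℝ) ≤ 2 * Λ)
        have h3 : 2 * Λ * (Λ + c₂ / (2 * Λ)) = 2 * Λ ^ 2 + c₂ := by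
          field_simp
        linarith
      have he : z ^ 2 ≤ 2 * L + 6 * Λ * Real.sqrt L := by
        have h4 := mul_le_mul_of_nonneg_left hz2s (by positivity : (0:ℝ) ≤ 2 * Λ)
        linarith [k6, hd, h4]
      set y₃ := Real.sqrt (-2 * Real.log w + 6 * Λ * Real.sqrt L) with hy₃def
      have hy₃arg : -2 * Real.log w + 6 * Λ * Real.sqrt L = 2 * L + 6 * Λ * Real.sqrt L := by
        rw [hLdef]; ring
      have hzy₃ : z ≤ y₃ := by
        calc z = Real.sqrt (z ^ 2) := (Real.sqrt_sq hz0).symm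
          _ ≤ y₃ := Real.sqrt_le_sqrt (by rw [hy₃arg]; exact he)
      have hy₃M : M₀' ≤ y₃ := by
        have hT7 : M₀' ^ 2 ≤ L := hB7.trans hLL
        have h1 : M₀' ^ 2 ≤ -2 * Real.log w + 6 * Λ * Real.sqrt L := by
          rw [hy₃arg]; linarith [hT7, hL0, mul_nonneg hΛ.le hsL0]
        calc M₀' = Real.sqrt (M₀' ^ 2) := (Real.sqrt_sq hM₀'0).symm
          _ ≤ y₃ := Real.sqrt_le_sqrt h1
      have hgy₃ : g y₃ ≤ g z := hga z y₃ (hM₀M.trans hzM) hzy₃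
      have hlg := Real.log_le_log (hpos y₃) hgy₃
      have hub : z ^ 2 ≤ -2 * Real.log w - 2 * Real.log (g y₃) + CC := by
        have he2 : -2 * Real.log w = 2 * L := by rw [hLdef]; ring
        rw [he2]; linarith [k4, hlg, hC2neg, hCC1]
      calc z = Real.sqrt (z ^ 2) := (Real.sqrt_sq hz0).symm
        _ ≤ Real.sqrt (-2 * Real.log w - 2 * Real.log (g y₃) + CC) := Real.sqrt_le_sqrt hub
  · -- Tendsto part
    have hlogtend : Tendsto (fun w : ℝ => -Real.log w) (nhdsWithin 0 (Set.Ioi 0)) atTop :=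
      tendsto_neg_atBot_atTop.comp Real.tendsto_log_nhdsGT_zero
    have hdiv0 : ∀ c : ℝ, Tendsto (fun L : ℝ => c / (2 * L)) atTop (nhds 0) := by
      intro c
      exact Tendsto.div_atTop tendsto_const_nhds
        (Tendsto.const_mul_atTop two_pos tendsto_id)
    have hsq1 : ∀ c : ℝ, Tendsto (fun L : ℝ => Real.sqrt (1 - c / (2 * L))) atTop (nhds 1) := by
      intro c
      have h1 : Tendsto (fun L : ℝ => 1 - c / (2 * L)) atTop (nhds 1) := by
        simpa using tendsto_const_nhds.sub (hdiv0 c)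
      have h2 := (Real.continuous_sqrt.tendsto 1).comp h1
      simpa [Function.comp_def, Real.sqrt_one] using h2
    have hfl : Tendsto (fun L : ℝ => Real.sqrt (2 * L - c₁) / Real.sqrt (2 * L))
        atTop (nhds 1) := by
      refine Tendsto.congr' ?_ (hsq1 c₁)
      filter_upwards [eventually_ge_atTop (max c₁ 1)] with L hLe
      have hL1 : (1:ℝ) ≤ L := le_trans (le_max_right _ _) hLe
      have hLc : c₁ ≤ L := le_trans (le_max_left _ _) hLe
      have h2L : (0:ℝ) < 2 * L := by linarith
      have hnum : (0:ℝ) ≤ 2 * L - c₁ := by linarith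
      rw [show 1 - c₁ / (2 * L) = (2 * L - c₁) / (2 * L) by field_simp, Real.sqrt_div hnum]
    have hsqrtTop : Tendsto (fun L : ℝ => Real.sqrt (2 * L)) atTop atTop := by
      rw [tendsto_atTop]
      intro b
      filter_upwards [eventually_ge_atTop (max (b ^ 2) 0)] with L hLe
      have h1 : b ^ 2 ≤ 2 * L := by
        have := le_trans (le_max_left (b ^ 2) 0) hLe
        have := le_trans (le_max_right (b ^ 2) 0) hLe
        linarith
      calc b ≤ |b| := le_abs_self _
        _ = Real.sqrt (b ^ 2) := (Real.sqrt_sq_eq_abs _).symm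
        _ ≤ Real.sqrt (2 * L) := Real.sqrt_le_sqrt h1
    have hfu : Tendsto (fun L : ℝ => (Λ + Real.sqrt (2 * L + c₃)) / Real.sqrt (2 * L))
        atTop (nhds 1) := by
      have hterm1 : Tendsto (fun L : ℝ => Λ / Real.sqrt (2 * L)) atTop (nhds 0) :=
        Tendsto.div_atTop tendsto_const_nhds hsqrtTop
      have hterm2 : Tendsto (fun L : ℝ => Real.sqrt (2 * L + c₃) / Real.sqrt (2 * L))
          atTop (nhds 1) := by
        refine Tendsto.congr' ?_ (hsq1 (-c₃))
        filter_upwards [eventually_ge_atTop (1:ℝ)] with L hL1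
        have h2L : (0:ℝ) < 2 * L := by linarith
        have hnum : (0:ℝ) ≤ 2 * L + c₃ := by linarith [hc₃0]
        rw [show 1 - (-c₃) / (2 * L) = (2 * L + c₃) / (2 * L) by field_simp; ring,
          Real.sqrt_div hnum]
      have hsum := hterm1.add hterm2
      rw [zero_add] at hsum
      exact Tendsto.congr (fun L => (add_div _ _ _).symm) hsum
    have hmem : Set.Ioo (0:ℝ) (Real.exp (-L₀)) ∈ nhdsWithin (0:ℝ) (Set.Ioi 0) :=
      Ioo_mem_nhdsGT_of_mem (Set.left_mem_Ico.mpr (Real.exp_pos _))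
    refine tendsto_of_tendsto_of_tendsto_of_le_of_le' (hfl.comp hlogtend)
      (hfu.comp hlogtend) ?_ ?_
    · filter_upwards [hmem] with w hw
      obtain ⟨hw0, hww⟩ := hw
      have hw1 : w ≤ 1 := (hww.le).trans (Real.exp_le_one_iff.mpr (by linarith))
      obtain ⟨hz0, k2, k3, k4, k6, k5⟩ := key w hw0 hw1
      have hLL : L₀ ≤ -Real.log w := by
        have h := Real.log_le_log hw0 hww.le
        rw [Real.log_exp] at h; linarith
      have hL1 : (1:ℝ) ≤ -Real.log w := hB1.trans hLL
      have hden : (0:ℝ) < Real.sqrt (-2 * Real.log w) :=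
        Real.sqrt_pos.mpr (by linarith)
      simp only [Function.comp]
      have hnum : Real.sqrt (2 * (-Real.log w) - c₁) ≤ ζ w := by
        calc Real.sqrt (2 * (-Real.log w) - c₁) ≤ Real.sqrt ((ζ w) ^ 2) :=
            Real.sqrt_le_sqrt k3
          _ = ζ w := Real.sqrt_sq hz0
      have heq : (2 : ℝ) * (-Real.log w) = -2 * Real.log w := by ring
      rw [heq] at hnum ⊢
      gcongr
    · filter_upwards [hmem] with w hw
      obtain ⟨hw0, hww⟩ := hw
      have hw1 : w ≤ 1 := (hww.le).trans (Real.exp_le_one_iff.mpr (by linarith))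
      obtain ⟨hz0, k2, k3, k4, k6, k5⟩ := key w hw0 hw1
      have hLL : L₀ ≤ -Real.log w := by
        have h := Real.log_le_log hw0 hww.le
        rw [Real.log_exp] at h; linarith
      have hL1 : (1:ℝ) ≤ -Real.log w := hB1.trans hLL
      have hden : (0:ℝ) < Real.sqrt (-2 * Real.log w) :=
        Real.sqrt_pos.mpr (by linarith)
      simp only [Function.comp]
      have heq : (2 : ℝ) * (-Real.log w) = -2 * Real.log w := by ring
      rw [heq] at k5 ⊢
      gcongr
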